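/- arXiv:1402.5384 — 5 statements merged into one kernel-verified Lean document; each statement's English description precedes it below -/
import Mathlib

section
/- Let I ≥ 2, J ≥ 2, let π = (π_1,...,π_J)^T be a probability vector with all entries positive, let π* = (π_1,...,π_{J-1})^T, let n_1,...,n_I be positive reals with n = n_1 + ... + n_I, set ν_i = n_i/n and ν* = (ν_1,...,ν_{I-1})^T. Let W be the IJ × I(J-1) matrix W = A ⊗ B, where A is the I × I matrix whose first I-1 rows are (1_{I-1}, Id_{I-1}) (a column of ones followed by the identity) and whose last row is (1, 0,...,0), and B is the J × (J-1) matrix consisting of the (J-1)×(J-1) identity matrix with a row of zeros appended at the bottom. Then W^T (⊕_{i=1}^I ν_i (D_π − π π^T)) W = M ⊗ (D_{π*} − π* π*^T), where ⊕ denotes the block-diagonal direct sum, D_v denotes the diagonal matrix with diagonal v, and M is the I × I block matrix with (1,1)-entry 1, first row (after the corner) ν*^T, first column (after the corner) ν*, and lower-right (I-1)×(I-1) block D_{ν*}. In particular, if n_i/n → ν_i as n → ∞, the limiting Fisher information matrix under the homogeneity hypothesis equals M ⊗ (D_{π*} − π* π*^T) with the limiting ν. -/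
open Matrix
open scoped Kronecker

/-- Theorem 1 of the paper: with `I = k+1`, `J = m+1`, the Fisher
information matrix `Wᵀ (⊕ᵢ νᵢ (D_π − π πᵀ)) W` of the saturated loglinear model
under the homogeneity hypothesis factors as `M ⊗ (D_{π*} − π* π*ᵀ)`.
Row/column indices of size `J` are modelled by `Fin m ⊕ Unit` (the `Unit`
component being the last category), and correspondingly for size `I`. -/
theorem stmt0 (k m : ℕ) (hk : 1 ≤ k) (hm : 1 ≤ m)
    -- π is a probability vector of length J = m+1 with positive entries
    (pi : Fin m ⊕ Unit → ℝ) (hπpos : ∀ j, 0 < pi j) (hπsum : ∑ j, pi j = 1)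
    -- sample sizes n₁,...,n_I > 0 with total n and fractions ν i = nᵢ / n
    (nvec : Fin k ⊕ Unit → ℝ) (hnpos : ∀ i, 0 < nvec i)
    (n : ℝ) (hn : n = ∑ i, nvec i)
    (ν : Fin k ⊕ Unit → ℝ) (hν : ∀ i, ν i = nvec i / n)
    -- A : I × I, first I−1 rows are (1_{I−1} | Id_{I−1}), last row is (1, 0,…,0)
    (A : Matrix (Fin k ⊕ Unit) (Unit ⊕ Fin k) ℝ)
    (hA : A = Matrix.fromBlocks (Matrix.of fun _ _ => (1 : ℝ)) 1
        (Matrix.of fun _ _ => (1 : ℝ)) 0)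
    -- B : J × (J−1), the identity with a row of zeros appended at the bottom
    (B : Matrix (Fin m ⊕ Unit) (Fin m) ℝ)
    (hB : B = Matrix.fromRows (1 : Matrix (Fin m) (Fin m) ℝ) 0)
    -- W = A ⊗ B
    (W : Matrix ((Fin k ⊕ Unit) × (Fin m ⊕ Unit)) ((Unit ⊕ Fin k) × Fin m) ℝ)
    (hW : W = A ⊗ₖ B)
    -- the J × J multinomial covariance matrix D_π − π πᵀ
    (Sig : Matrix (Fin m ⊕ Unit) (Fin m ⊕ Unit) ℝ)
    (hSig : Sig = Matrix.diagonal pi - Matrix.vecMulVec pi pi)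
    -- the block-diagonal direct sum ⊕ᵢ νᵢ Sig (block index first)
    (D : Matrix ((Fin k ⊕ Unit) × (Fin m ⊕ Unit)) ((Fin k ⊕ Unit) × (Fin m ⊕ Unit)) ℝ)
    (hD : D = (Matrix.blockDiagonal fun i => ν i • Sig).submatrix Prod.swap Prod.swap)
    -- M : I × I, corner 1, first row ν*ᵀ, first column ν*, lower-right block D_{ν*}
    (M : Matrix (Unit ⊕ Fin k) (Unit ⊕ Fin k) ℝ)
    (hM : M = Matrix.fromBlocks 1 (Matrix.of fun _ j => ν (Sum.inl j))
        (Matrix.of fun i _ => ν (Sum.inl i)) (Matrix.diagonal fun i => ν (Sum.inl i))) :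
    Wᵀ * D * W =
      M ⊗ₖ (Matrix.diagonal (fun j : Fin m => pi (Sum.inl j)) -
        Matrix.vecMulVec (fun j : Fin m => pi (Sum.inl j)) (fun j : Fin m => pi (Sum.inl j))) := by
  have hn0 : 0 < n := by
    rw [hn]
    exact Finset.sum_pos (fun i _ => hnpos i) Finset.univ_nonempty
  have hνsum : ∑ i, ν i = 1 := by
    simp only [hν, ← Finset.sum_div, ← hn]
    exact div_self hn0.ne'
  -- D as a Kronecker product
  have hD' : D = (Matrix.diagonal ν) ⊗ₖ Sig := by
    rw [hD]
    ext ⟨i, j⟩ ⟨i', j'⟩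
    by_cases h : i = i' <;>
      simp [Matrix.blockDiagonal_apply, Matrix.diagonal_apply, h]
  have hAM : Aᵀ * Matrix.diagonal ν * A = M := by
    rw [Matrix.mul_assoc, hA, hM]
    ext a c
    rcases a with a | a <;> rcases c with c | c
    · simp only [Matrix.mul_apply, Matrix.transpose_apply, Fintype.sum_sum_type,
        Matrix.fromBlocks_apply₁₁, Matrix.fromBlocks_apply₂₁, Matrix.of_apply,
        Matrix.diagonal_apply, Sum.inl.injEq, Sum.inr.injEq, one_mul, mul_one,
        Finset.sum_ite_eq, Finset.sum_ite_eq', Finset.mem_univ, if_true,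
        reduceCtorEq, if_false, Finset.sum_const_zero, add_zero, zero_add,
        mul_zero, zero_mul, ite_mul, mul_ite]
      have : (1 : Matrix Unit Unit ℝ) a c = 1 := by simp [Matrix.one_apply]
      rw [this, ← hνsum]
      try rw [Fintype.sum_sum_type]
      try simp [Finset.sum_ite_eq]
    · simp [Matrix.mul_apply, Fintype.sum_sum_type, Matrix.one_apply,
        Matrix.diagonal_apply, Sum.inl.injEq, mul_ite, ite_mul,
        Finset.sum_ite_eq, Finset.sum_ite_eq']
    · simp [Matrix.mul_apply, Fintype.sum_sum_type, Matrix.one_apply,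
        Matrix.diagonal_apply, Sum.inl.injEq, mul_ite, ite_mul,
        Finset.sum_ite_eq, Finset.sum_ite_eq']
    · by_cases h : a = c
      · subst h
        simp [Matrix.mul_apply, Fintype.sum_sum_type, Matrix.one_apply,
          Matrix.diagonal_apply, Sum.inl.injEq, mul_ite, ite_mul,
          Finset.sum_ite_eq, Finset.sum_ite_eq']
      · simp [Matrix.mul_apply, Fintype.sum_sum_type, Matrix.one_apply,
          Matrix.diagonal_apply, Sum.inl.injEq, mul_ite, ite_mul,
          Finset.sum_ite_eq, Finset.sum_ite_eq', h, Ne.symm h]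
  have hBS : Bᵀ * Sig * B =
      Matrix.diagonal (fun j : Fin m => pi (Sum.inl j)) -
        Matrix.vecMulVec (fun j : Fin m => pi (Sum.inl j))
          (fun j : Fin m => pi (Sum.inl j)) := by
    rw [Matrix.mul_assoc, hB, hSig]
    ext b d
    by_cases h : b = d
    · subst h
      simp [Matrix.mul_apply, Fintype.sum_sum_type, Matrix.one_apply,
        Matrix.diagonal_apply, Matrix.vecMulVec_apply, Matrix.sub_apply,
        Sum.inl.injEq, mul_ite, ite_mul, sub_mul, mul_sub,
        Finset.sum_ite_eq, Finset.sum_ite_eq', Finset.sum_sub_distrib]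
    · simp [Matrix.mul_apply, Fintype.sum_sum_type, Matrix.one_apply,
        Matrix.diagonal_apply, Matrix.vecMulVec_apply, Matrix.sub_apply,
        Sum.inl.injEq, mul_ite, ite_mul, sub_mul, mul_sub,
        Finset.sum_ite_eq, Finset.sum_ite_eq', Finset.sum_sub_distrib,
        h, Ne.symm h]
  rw [hW, hD', ← Matrix.kroneckerMap_transpose, ← Matrix.mul_kronecker_mul,
    ← Matrix.mul_kronecker_mul, hAM, hBS]
end

section
/- Let q = (q_1,...,q_K)^T (K ≥ 2) be a probability vector with all entries positive, q* = (q_1,...,q_{K-1})^T, and K(q) = G_{K-1} D_{q*}^{-1} G_{K-1}^T + (1/q_K) e_{K-1} e_{K-1}^T. Then K(q) is invertible and K(q)^{-1} = T_{K-1}^T (D_{q*} − q* q*^T) T_{K-1}, where T_{K-1} = G_{K-1}^{-1} is the (K-1)×(K-1) upper triangular matrix with all entries on and above the diagonal equal to 1. -/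
open Matrix

/-- `G_h`: the h×h matrix with 1's on the diagonal, −1's on the superdiagonal. -/
def Gmat (h : ℕ) : Matrix (Fin h) (Fin h) ℝ :=
  Matrix.of fun i j => if i = j then 1 else if (j : ℕ) = (i : ℕ) + 1 then -1 else 0

/-- `T_h = G_h⁻¹`: the h×h upper triangular matrix of ones. -/
def Tmat (h : ℕ) : Matrix (Fin h) (Fin h) ℝ :=
  Matrix.of fun i j => if i ≤ j then 1 else 0

/-- `e_{K-1}`: the last standard unit vector of ℝ^{K-1}. -/
def lastUnitVec (h : ℕ) : Fin h → ℝ := fun i => if (i : ℕ) + 1 = h then 1 else 0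

/-- `K(q) = G_{K-1} D_{q*}⁻¹ G_{K-1}ᵀ + (1/q_K) e_{K-1} e_{K-1}ᵀ`. -/
noncomputable def Kmat {K : ℕ} (q : Fin (K + 1) → ℝ) : Matrix (Fin K) (Fin K) ℝ :=
  Gmat K * Matrix.diagonal (fun j : Fin K => (q j.castSucc)⁻¹) * (Gmat K)ᵀ +
    (1 / q (Fin.last K)) • Matrix.vecMulVec (lastUnitVec K) (lastUnitVec K)

lemma GT_eq_one (m : ℕ) : Gmat m * Tmat m = 1 := by
  ext i j
  rw [Matrix.mul_apply]
  have hsplit : ∀ k : Fin m, Gmat m i k * Tmat m k j =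
      (if i = k then (if k ≤ j then (1:ℝ) else 0) else 0)
      + (if (k:ℕ) = (i:ℕ)+1 then -(if k ≤ j then (1:ℝ) else 0) else 0) := by
    intro k
    simp only [Gmat, Tmat, Matrix.of_apply]
    by_cases h1 : i = k
    · subst h1
      have : ¬ ((i:ℕ) = (i:ℕ)+1) := by omega
      simp [this]
    · simp only [h1, if_false]
      by_cases h2 : (k:ℕ) = (i:ℕ)+1 <;> simp [h2] <;> split_ifs <;> norm_num
  rw [Finset.sum_congr rfl (fun k _ => hsplit k), Finset.sum_add_distrib,
    Finset.sum_ite_eq]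
  simp only [Finset.mem_univ, if_true]
  have hj := j.isLt
  have hi := i.isLt
  by_cases h : (i:ℕ)+1 < m
  · have hcond : ∀ k : Fin m, ((k:ℕ) = (i:ℕ)+1) ↔ k = ⟨(i:ℕ)+1, h⟩ := by
      intro k; rw [Fin.ext_iff]
    simp_rw [hcond]
    rw [Finset.sum_ite_eq']
    simp only [Finset.mem_univ, if_true, Matrix.one_apply]
    simp only [Fin.le_def, Fin.ext_iff]
    split_ifs <;> first | omega | norm_num
  · rw [Finset.sum_eq_zero (fun k _ => by
      rw [if_neg]; have := k.isLt; omega)]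
    simp only [add_zero, Matrix.one_apply, Fin.le_def, Fin.ext_iff]
    split_ifs <;> first | omega | norm_num

lemma TG_eq_one (m : ℕ) : Tmat m * Gmat m = 1 :=
  mul_eq_one_comm.mp (GT_eq_one m)

lemma G_rowsum (m : ℕ) (i : Fin m) : ∑ k, Gmat m i k = lastUnitVec m i := by
  have hsplit : ∀ k : Fin m, Gmat m i k =
      (if i = k then (1:ℝ) else 0)
      + (if (k:ℕ) = (i:ℕ)+1 then (-1:ℝ) else 0) := by
    intro k
    simp only [Gmat, Matrix.of_apply]
    by_cases h1 : i = k
    · subst h1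
      have : ¬ ((i:ℕ) = (i:ℕ)+1) := by omega
      simp [this]
    · simp only [h1, if_false]
      by_cases h2 : (k:ℕ) = (i:ℕ)+1 <;> simp [h2]
  rw [Finset.sum_congr rfl (fun k _ => hsplit k), Finset.sum_add_distrib,
    Finset.sum_ite_eq]
  simp only [Finset.mem_univ, if_true]
  have hi := i.isLt
  unfold lastUnitVec
  by_cases h : (i:ℕ)+1 < m
  · have hcond : ∀ k : Fin m, ((k:ℕ) = (i:ℕ)+1) ↔ k = ⟨(i:ℕ)+1, h⟩ := by
      intro k; rw [Fin.ext_iff]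
    simp_rw [hcond]
    rw [Finset.sum_ite_eq']
    simp only [Finset.mem_univ, if_true]
    rw [if_neg (by omega)]
    ring
  · rw [Finset.sum_eq_zero (fun k _ => by
      rw [if_neg]; have := k.isLt; omega)]
    rw [if_pos (by omega)]
    ring

lemma mul_vecMulVec' {m : ℕ} (M : Matrix (Fin m) (Fin m) ℝ) (u w : Fin m → ℝ) :
    M * Matrix.vecMulVec u w = Matrix.vecMulVec (M *ᵥ u) w := by
  ext i j
  simp only [Matrix.mul_apply, Matrix.vecMulVec_apply, Matrix.mulVec, dotProduct,
    Finset.sum_mul]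
  exact Finset.sum_congr rfl fun k _ => by ring

lemma vecMulVec_mul' {m : ℕ} (M : Matrix (Fin m) (Fin m) ℝ) (u w : Fin m → ℝ) :
    Matrix.vecMulVec u w * M = Matrix.vecMulVec u (w ᵥ* M) := by
  ext i j
  simp only [Matrix.mul_apply, Matrix.vecMulVec_apply, Matrix.vecMul, dotProduct,
    Finset.mul_sum]
  exact Finset.sum_congr rfl fun k _ => by ring

/-- formula (H-1-b) of the paper: `T_{K-1}` is the inverse of
`G_{K-1}`, `K(q)` is invertible and
`K(q)⁻¹ = T_{K-1}ᵀ (D_{q*} − q* q*ᵀ) T_{K-1}` (here `K = m+1`, `m ≥ 1`). -/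
theorem stmt4 (m : ℕ) (hm : 1 ≤ m)
    (q : Fin (m + 1) → ℝ) (hpos : ∀ j, 0 < q j) (hsum : ∑ j, q j = 1) :
    Gmat m * Tmat m = 1 ∧ Tmat m * Gmat m = 1 ∧
    IsUnit (Kmat q) ∧
    (Kmat q)⁻¹ = (Tmat m)ᵀ *
        (Matrix.diagonal (fun j : Fin m => q j.castSucc) -
          Matrix.vecMulVec (fun j : Fin m => q j.castSucc) (fun j : Fin m => q j.castSucc)) *
        Tmat m := by
  set d : Fin m → ℝ := fun j => q j.castSucc with hd_def
  have hd : ∀ j, d j ≠ 0 := fun j => (hpos j.castSucc).ne'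
  have hqK : q (Fin.last m) ≠ 0 := (hpos _).ne'
  set G := Gmat m
  set T := Tmat m
  set e := lastUnitVec m
  set D : Matrix (Fin m) (Fin m) ℝ := Matrix.diagonal d with hD_def
  set M : Matrix (Fin m) (Fin m) ℝ := D - Matrix.vecMulVec d d with hM_def
  set B : Matrix (Fin m) (Fin m) ℝ := Tᵀ * M * T with hB_def
  have h1 : G * T = 1 := GT_eq_one m
  have h2 : T * G = 1 := TG_eq_one m
  have h2t : Gᵀ * Tᵀ = 1 := by rw [← Matrix.transpose_mul, h2, Matrix.transpose_one]
  -- D⁻¹ (D - d dᵀ) = 1 - 1⃗ dᵀ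
  have hDinv : Matrix.diagonal (fun j => (d j)⁻¹) * M
      = 1 - Matrix.vecMulVec (fun _ => (1:ℝ)) d := by
    rw [hM_def, mul_sub, Matrix.diagonal_mul_diagonal]
    congr 1
    · have h : (fun i => (d i)⁻¹ * d i) = fun _ => (1:ℝ) := funext fun j => inv_mul_cancel₀ (hd j)
      rw [h, Matrix.diagonal_one]
    · ext i j
      rw [Matrix.diagonal_mul, Matrix.vecMulVec_apply, Matrix.vecMulVec_apply,
        ← mul_assoc, inv_mul_cancel₀ (hd i)]
  -- G 1⃗ = e
  have hGone : G *ᵥ (fun _ => (1:ℝ)) = e := by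
    funext i
    simp only [Matrix.mulVec, dotProduct, mul_one]
    exact G_rowsum m i
  -- e Tᵀ = 1⃗
  have hTe : e ᵥ* Tᵀ = fun _ => (1:ℝ) := by
    funext j
    simp only [Matrix.vecMul, dotProduct, Matrix.transpose_apply]
    have hcond : ∀ i : Fin m, ((i:ℕ) + 1 = m) ↔ i = ⟨m - 1, by omega⟩ := by
      intro i; rw [Fin.ext_iff]; have := i.isLt; constructor <;> intro h <;> simp at h ⊢ <;> omega
    have : ∀ i : Fin m, e i * T j i = if i = ⟨m - 1, by omega⟩ then T j i else 0 := by
      intro i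
      simp only [e, lastUnitVec]
      rw [if_congr (hcond i) rfl rfl]
      split_ifs <;> ring
    rw [Finset.sum_congr rfl fun i _ => this i, Finset.sum_ite_eq']
    simp only [Finset.mem_univ, if_true, T, Tmat, Matrix.of_apply]
    rw [if_pos]
    exact Fin.le_def.mpr (by have := j.isLt; simp; omega)
  -- 1⃗ M = q_K • d
  have hsum' : ∑ i, d i = 1 - q (Fin.last m) := by
    have := hsum
    rw [Fin.sum_univ_castSucc] at this
    simp only [hd_def]
    linarith
  have hOnesM : (fun _ => (1:ℝ)) ᵥ* M = q (Fin.last m) • d := by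
    funext j
    simp only [hM_def, Matrix.sub_apply, Matrix.vecMul, dotProduct, hD_def,
      Matrix.diagonal_apply, Matrix.vecMulVec_apply, one_mul, Pi.smul_apply, smul_eq_mul]
    rw [Finset.sum_sub_distrib, Finset.sum_ite_eq']
    simp only [Finset.mem_univ, if_true]
    rw [← Finset.sum_mul, hsum']
    ring
  -- main identity : Kmat q * B = 1
  have key : Kmat q * B = 1 := by
    have hGcoll : ∀ X : Matrix (Fin m) (Fin m) ℝ, Gᵀ * (Tᵀ * X) = X := by
      intro X; rw [← mul_assoc, h2t, one_mul]
    have term1 : G * Matrix.diagonal (fun j : Fin m => (d j)⁻¹) * Gᵀ * B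
        = 1 - Matrix.vecMulVec e (d ᵥ* T) := by
      rw [hB_def, mul_assoc (G * Matrix.diagonal fun j => (d j)⁻¹) Gᵀ, mul_assoc Tᵀ,
        hGcoll, mul_assoc, ← mul_assoc (Matrix.diagonal fun j => (d j)⁻¹), hDinv,
        sub_mul, one_mul, vecMulVec_mul', mul_sub, h1, mul_vecMulVec', hGone]
    have term2 : (1 / q (Fin.last m)) • Matrix.vecMulVec e e * B
        = Matrix.vecMulVec e (d ᵥ* T) := by
      rw [hB_def, Matrix.smul_mul, ← mul_assoc, vecMulVec_mul', vecMulVec_mul',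
        ← Matrix.vecMul_vecMul, hTe, hOnesM, Matrix.smul_vecMul]
      ext i j
      simp only [Matrix.smul_apply, Matrix.vecMulVec_apply, smul_eq_mul, Pi.smul_apply]
      field_simp
    show (G * Matrix.diagonal (fun j : Fin m => (q j.castSucc)⁻¹) * Gᵀ
        + (1 / q (Fin.last m)) • Matrix.vecMulVec e e) * B = 1
    rw [add_mul, term1, term2]
    abel
  refine ⟨h1, h2, ⟨⟨Kmat q, B, key, mul_eq_one_comm.mp key⟩, rfl⟩, ?_⟩
  rw [Matrix.inv_eq_right_inv key]
end

section
/- Let I ≥ 2, J ≥ 2, let ν = (ν_1,...,ν_I)^T and π = (π_1,...,π_J)^T be probability vectors with all entries positive, with truncations ν* and π*. With K(q) = G_{K-1} D_{q*}^{-1} G_{K-1}^T + (1/q_K) e_{K-1} e_{K-1}^T for a probability vector q of length K with truncation q*, the matrix H = K(ν) ⊗ K(π) is invertible and H^{-1} = (T_{I-1}^T (D_{ν*} − ν* ν*^T) T_{I-1}) ⊗ (T_{J-1}^T (D_{π*} − π* π*^T) T_{J-1}), where T_h = G_h^{-1} is the h×h upper triangular matrix of ones. -/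
open Matrix
open scoped Kronecker

lemma GT (h : ℕ) : Gmat h * Tmat h = 1 := by
  ext i j
  simp only [Matrix.mul_apply, Gmat, Tmat, Matrix.of_apply, Matrix.one_apply]
  have key : ∀ l : Fin h,
      (if i = l then (1:ℝ) else if (l : ℕ) = (i : ℕ) + 1 then -1 else 0) *
        (if l ≤ j then 1 else 0)
      = (if l = i then (if i ≤ j then (1:ℝ) else 0) else 0) +
        (if (l : ℕ) = (i : ℕ) + 1 then (if (l:ℕ) ≤ (j:ℕ) then (-1:ℝ) else 0) else 0) := by
    intro l
    simp only [Fin.ext_iff, Fin.le_def]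
    split_ifs <;> first | ring1 | (exfalso; omega)
  rw [Finset.sum_congr rfl fun l _ => key l, Finset.sum_add_distrib,
    Finset.sum_ite_eq' Finset.univ i]
  simp only [Finset.mem_univ, if_true]
  have hsum : ∑ l : Fin h, (if (l : ℕ) = (i : ℕ) + 1 then (if (l:ℕ) ≤ (j:ℕ) then (-1:ℝ) else 0) else 0)
      = if ((i:ℕ) + 1 < h ∧ (i:ℕ) + 1 ≤ (j:ℕ)) then (-1:ℝ) else 0 := by
    by_cases hlt : (i : ℕ) + 1 < h
    · rw [Finset.sum_eq_single (⟨(i:ℕ)+1, hlt⟩ : Fin h)]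
      · simp [hlt]
      · intro b _ hb
        have : (b : ℕ) ≠ (i : ℕ) + 1 := fun h' => hb (Fin.ext (by simpa using h'))
        simp [this]
      · simp
    · rw [if_neg (by omega)]
      apply Finset.sum_eq_zero
      intro b _
      have : (b : ℕ) ≠ (i : ℕ) + 1 := by have := b.isLt; omega
      simp [this]
  rw [hsum]
  have hj := j.isLt
  simp only [Fin.ext_iff, Fin.le_def]
  split_ifs <;> first | ring1 | (exfalso; omega)

lemma TG (h : ℕ) : Tmat h * Gmat h = 1 := mul_eq_one_comm.mp (GT h)

lemma G_mulVec_ones (h : ℕ) : Gmat h *ᵥ (fun _ => 1) = lastUnitVec h := by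
  ext i
  simp only [mulVec, dotProduct, Gmat, Matrix.of_apply, lastUnitVec, mul_one]
  have key : ∀ l : Fin h,
      (if i = l then (1:ℝ) else if (l : ℕ) = (i : ℕ) + 1 then -1 else 0)
      = (if l = i then (1:ℝ) else 0) + (if (l : ℕ) = (i : ℕ) + 1 then (-1:ℝ) else 0) := by
    intro l
    simp only [Fin.ext_iff]
    split_ifs <;> first | ring1 | (exfalso; omega)
  rw [Finset.sum_congr rfl fun l _ => key l, Finset.sum_add_distrib,
    Finset.sum_ite_eq' Finset.univ i]
  have hsum : ∑ l : Fin h, (if (l : ℕ) = (i : ℕ) + 1 then (-1:ℝ) else 0)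
      = if (i:ℕ) + 1 < h then (-1:ℝ) else 0 := by
    by_cases hlt : (i : ℕ) + 1 < h
    · rw [Finset.sum_eq_single (⟨(i:ℕ)+1, hlt⟩ : Fin h)]
      · simp [hlt]
      · intro b _ hb
        have : (b : ℕ) ≠ (i : ℕ) + 1 := fun h' => hb (Fin.ext (by simpa using h'))
        simp [this]
      · simp
    · rw [if_neg hlt]
      apply Finset.sum_eq_zero
      intro b _
      have : (b : ℕ) ≠ (i : ℕ) + 1 := by have := b.isLt; omega
      simp [this]
  rw [hsum]
  have hi := i.isLt
  simp only [Finset.mem_univ, if_true]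
  split_ifs <;> first | ring1 | (exfalso; omega)

lemma T_mulVec_e (h : ℕ) : Tmat h *ᵥ lastUnitVec h = fun _ => 1 := by
  ext i
  have hpos : 0 < h := i.pos
  simp only [mulVec, dotProduct, Tmat, Matrix.of_apply, lastUnitVec]
  rw [Finset.sum_eq_single (⟨h - 1, by omega⟩ : Fin h)]
  · have h1 : (h - 1 : ℕ) + 1 = h := by omega
    have h2 : i ≤ (⟨h - 1, by omega⟩ : Fin h) := by
      have := i.isLt
      rw [Fin.le_def]
      simpa using by omega
    simp [h1, h2]
  · intro b _ hb
    have : (b : ℕ) + 1 ≠ h := by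
      intro h'
      apply hb
      apply Fin.ext
      simp
      omega
    simp [this]
  · simp

lemma mul_vecMulVec'_s6 {n p : Type*} [Fintype n] (A : Matrix p n ℝ) (v w : n → ℝ) :
    A * vecMulVec v w = vecMulVec (A *ᵥ v) w := by
  ext i j
  simp only [Matrix.mul_apply, vecMulVec_apply, mulVec, dotProduct, Finset.sum_mul]
  exact Finset.sum_congr rfl fun x _ => by ring

lemma vecMulVec_mul'_s6 {n p : Type*} [Fintype n] (v w : n → ℝ) (A : Matrix n p ℝ) :
    vecMulVec v w * A = vecMulVec v (w ᵥ* A) := by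
  ext i j
  simp only [Matrix.mul_apply, vecMulVec_apply, vecMul, dotProduct, Finset.mul_sum]
  exact Finset.sum_congr rfl fun x _ => by ring

lemma vecMul_vecMulVec' {n p : Type*} [Fintype n] (x : n → ℝ) (a : n → ℝ) (b : p → ℝ) :
    x ᵥ* vecMulVec a b = (x ⬝ᵥ a) • b := by
  ext j
  simp only [vecMul, dotProduct, vecMulVec_apply, Pi.smul_apply, smul_eq_mul, Finset.sum_mul]
  exact Finset.sum_congr rfl fun i _ => by ring

lemma vecMulVec_smul_right {n p : Type*} (a : n → ℝ) (c : ℝ) (b : p → ℝ) :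
    vecMulVec a (c • b) = c • vecMulVec a b := by
  ext i j
  simp [vecMulVec_apply]
  ring

lemma Kmat_mul_right_inv {K : ℕ} (q : Fin (K + 1) → ℝ) (hpos : ∀ i, 0 < q i)
    (hsum : ∑ i, q i = 1) :
    Kmat q * ((Tmat K)ᵀ *
        (Matrix.diagonal (fun i : Fin K => q i.castSucc) -
          Matrix.vecMulVec (fun i : Fin K => q i.castSucc) (fun i : Fin K => q i.castSucc)) *
        Tmat K) = 1 := by
  have hqL : q (Fin.last K) ≠ 0 := (hpos _).ne'
  have hsum' : ∑ i : Fin K, q i.castSucc = 1 - q (Fin.last K) := by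
    rw [Fin.sum_univ_castSucc] at hsum
    linarith
  have hGtTt : (Gmat K)ᵀ * (Tmat K)ᵀ = 1 := by rw [← transpose_mul, TG, transpose_one]
  have hDinvD : Matrix.diagonal (fun j : Fin K => (q j.castSucc)⁻¹) *
      Matrix.diagonal (fun i : Fin K => q i.castSucc) = 1 := by
    rw [diagonal_mul_diagonal]
    convert Matrix.diagonal_one
    exact inv_mul_cancel₀ ((hpos _).ne')
  have hDinvV : Matrix.diagonal (fun j : Fin K => (q j.castSucc)⁻¹) *ᵥ
      (fun i : Fin K => q i.castSucc) = fun _ => (1:ℝ) := by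
    funext i
    simp [mulVec_diagonal, inv_mul_cancel₀ ((hpos _).ne')]
  have honesD : (fun _ : Fin K => (1:ℝ)) ᵥ* Matrix.diagonal (fun i : Fin K => q i.castSucc)
      = fun i : Fin K => q i.castSucc := by
    funext i
    simp [vecMul_diagonal]
  have honesV : (fun _ : Fin K => (1:ℝ)) ⬝ᵥ (fun i : Fin K => q i.castSucc)
      = 1 - q (Fin.last K) := by
    simp [dotProduct, hsum']
  set v : Fin K → ℝ := fun i => q i.castSucc with hv
  set X : Matrix (Fin K) (Fin K) ℝ := Matrix.diagonal v - vecMulVec v v with hX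
  show (Gmat K * Matrix.diagonal (fun j : Fin K => (q j.castSucc)⁻¹) * (Gmat K)ᵀ +
      (1 / q (Fin.last K)) • vecMulVec (lastUnitVec K) (lastUnitVec K)) *
      ((Tmat K)ᵀ * X * Tmat K) = 1
  have term1 : Gmat K * Matrix.diagonal (fun j : Fin K => (q j.castSucc)⁻¹) * (Gmat K)ᵀ *
      ((Tmat K)ᵀ * X * Tmat K) = 1 - vecMulVec (lastUnitVec K) (v ᵥ* Tmat K) := by
    calc Gmat K * Matrix.diagonal (fun j : Fin K => (q j.castSucc)⁻¹) * (Gmat K)ᵀ *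
        ((Tmat K)ᵀ * X * Tmat K)
        = Gmat K * Matrix.diagonal (fun j : Fin K => (q j.castSucc)⁻¹) *
          ((Gmat K)ᵀ * (Tmat K)ᵀ) * (X * Tmat K) := by noncomm_ring
      _ = Gmat K * (Matrix.diagonal (fun j : Fin K => (q j.castSucc)⁻¹) * X) * Tmat K := by
          rw [hGtTt, mul_one]; noncomm_ring
      _ = Gmat K * (1 - vecMulVec (fun _ => (1:ℝ)) v) * Tmat K := by
          rw [hX, mul_sub, hDinvD, mul_vecMulVec'_s6, hDinvV]
      _ = Gmat K * Tmat K - Gmat K * vecMulVec (fun _ => (1:ℝ)) v * Tmat K := by noncomm_ring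
      _ = 1 - vecMulVec (lastUnitVec K) (v ᵥ* Tmat K) := by
          rw [GT, mul_vecMulVec'_s6, G_mulVec_ones, vecMulVec_mul'_s6]
  have term2 : vecMulVec (lastUnitVec K) (lastUnitVec K) * ((Tmat K)ᵀ * X * Tmat K)
      = q (Fin.last K) • vecMulVec (lastUnitVec K) (v ᵥ* Tmat K) := by
    rw [vecMulVec_mul'_s6, mul_assoc, ← Matrix.vecMul_vecMul, vecMul_transpose, T_mulVec_e,
      ← Matrix.vecMul_vecMul]
    have h1 : (fun _ : Fin K => (1:ℝ)) ᵥ* X = q (Fin.last K) • v := by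
      rw [hX, Matrix.vecMul_sub, honesD, vecMul_vecMulVec', honesV]
      funext i
      simp only [Pi.sub_apply, Pi.smul_apply, smul_eq_mul]
      ring
    rw [h1, Matrix.smul_vecMul, vecMulVec_smul_right]
  calc (Gmat K * Matrix.diagonal (fun j : Fin K => (q j.castSucc)⁻¹) * (Gmat K)ᵀ +
      (1 / q (Fin.last K)) • vecMulVec (lastUnitVec K) (lastUnitVec K)) *
      ((Tmat K)ᵀ * X * Tmat K)
      = Gmat K * Matrix.diagonal (fun j : Fin K => (q j.castSucc)⁻¹) * (Gmat K)ᵀ *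
        ((Tmat K)ᵀ * X * Tmat K) +
        (1 / q (Fin.last K)) •
          (vecMulVec (lastUnitVec K) (lastUnitVec K) * ((Tmat K)ᵀ * X * Tmat K)) := by
        rw [add_mul, smul_mul_assoc]
    _ = 1 := by
        rw [term1, term2, smul_smul, one_div, inv_mul_cancel₀ hqL, one_smul]
        exact sub_add_cancel _ _

/-- formula (H-1) of Corollary 3 of the paper: with `I = k+1`,
`J = m+1`, the matrix `H = K(ν) ⊗ K(π)` is invertible and
`H⁻¹ = (T_{I-1}ᵀ (D_{ν*} − ν* ν*ᵀ) T_{I-1}) ⊗ (T_{J-1}ᵀ (D_{π*} − π* π*ᵀ) T_{J-1})`. -/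
theorem stmt6 (k m : ℕ) (hk : 1 ≤ k) (hm : 1 ≤ m)
    (ν : Fin (k + 1) → ℝ) (hνpos : ∀ i, 0 < ν i) (hνsum : ∑ i, ν i = 1)
    (pi : Fin (m + 1) → ℝ) (hπpos : ∀ j, 0 < pi j) (hπsum : ∑ j, pi j = 1)
    (H : Matrix (Fin k × Fin m) (Fin k × Fin m) ℝ)
    (hH : H = Kmat ν ⊗ₖ Kmat pi) :
    IsUnit H ∧
      H⁻¹ = ((Tmat k)ᵀ *
          (Matrix.diagonal (fun i : Fin k => ν i.castSucc) -
            Matrix.vecMulVec (fun i : Fin k => ν i.castSucc) (fun i : Fin k => ν i.castSucc)) *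
          Tmat k) ⊗ₖ
        ((Tmat m)ᵀ *
          (Matrix.diagonal (fun j : Fin m => pi j.castSucc) -
            Matrix.vecMulVec (fun j : Fin m => pi j.castSucc) (fun j : Fin m => pi j.castSucc)) *
          Tmat m) := by
  subst hH
  have h1 := Kmat_mul_right_inv ν hνpos hνsum
  have h2 := Kmat_mul_right_inv pi hπpos hπsum
  have hmul : (Kmat ν ⊗ₖ Kmat pi) *
      (((Tmat k)ᵀ *
          (Matrix.diagonal (fun i : Fin k => ν i.castSucc) -
            Matrix.vecMulVec (fun i : Fin k => ν i.castSucc) (fun i : Fin k => ν i.castSucc)) *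
          Tmat k) ⊗ₖ
        ((Tmat m)ᵀ *
          (Matrix.diagonal (fun j : Fin m => pi j.castSucc) -
            Matrix.vecMulVec (fun j : Fin m => pi j.castSucc) (fun j : Fin m => pi j.castSucc)) *
          Tmat m)) = 1 := by
    rw [← Matrix.mul_kronecker_mul, h1, h2, Matrix.one_kronecker_one]
  exact ⟨@isUnit_of_invertible _ _ _ (invertibleOfRightInverse _ _ hmul), Matrix.inv_eq_right_inv hmul⟩
end

section
/- Let I ≥ 2, J ≥ 2, n_1,...,n_I > 0, n = n_1 + ... + n_I. Consider the saturated loglinear model log p_{ij} = u + u_{1(i)} + θ_{2(j)} + θ_{12(ij)} for i = 1,...,I, j = 1,...,J, with identifiability constraints u_{1(I)} = 0, θ_{2(J)} = 0, θ_{12(iJ)} = 0 for i = 1,...,I-1, and θ_{12(Ij)} = 0 for j = 1,...,J. If the product-multinomial constraints Σ_{j=1}^J p_{ij} = n_i/n hold for all i = 1,...,I, then for each i = 1,...,I-1, u_{1(i)} = log(n_i/n_I) + log( (1 + Σ_{j=1}^{J-1} exp(θ_{2(j)})) / (1 + Σ_{j=1}^{J-1} exp(θ_{2(j)} + θ_{12(ij)}))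 ). -/
/-- formula (theta1) of the paper: in the saturated loglinear
model `log p_{ij} = u + u_{1(i)} + θ_{2(j)} + θ_{12(ij)}` (with `I = k+1`,
`J = m+1`) under the identifiability constraints and the product-multinomial
constraints `∑_j p_{ij} = n_i/n`, the redundant row effects satisfy
`u_{1(i)} = log(n_i/n_I) + log((1 + ∑_j e^{θ_{2(j)}})/(1 + ∑_j e^{θ_{2(j)}+θ_{12(ij)}}))`. -/
theorem stmt10 (k m : ℕ) (hk : 1 ≤ k) (hm : 1 ≤ m)
    (nvec : Fin (k + 1) → ℝ) (hnpos : ∀ i, 0 < nvec i)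
    (n : ℝ) (hn : n = ∑ i, nvec i)
    (p : Fin (k + 1) → Fin (m + 1) → ℝ) (hppos : ∀ i j, 0 < p i j)
    (u : ℝ) (u1 : Fin (k + 1) → ℝ) (θ2 : Fin (m + 1) → ℝ)
    (θ12 : Fin (k + 1) → Fin (m + 1) → ℝ)
    (hmodel : ∀ i j, Real.log (p i j) = u + u1 i + θ2 j + θ12 i j)
    (hu1 : u1 (Fin.last k) = 0)
    (hθ2 : θ2 (Fin.last m) = 0)
    (hθ12a : ∀ i : Fin k, θ12 i.castSucc (Fin.last m) = 0)
    (hθ12b : ∀ j, θ12 (Fin.last k) j = 0)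
    (hconstr : ∀ i, ∑ j, p i j = nvec i / n) :
    ∀ i : Fin k,
      u1 i.castSucc = Real.log (nvec i.castSucc / nvec (Fin.last k)) +
        Real.log ((1 + ∑ j : Fin m, Real.exp (θ2 j.castSucc)) /
          (1 + ∑ j : Fin m, Real.exp (θ2 j.castSucc + θ12 i.castSucc j.castSucc))) := by
  intro i
  have hnpos' : 0 < n := by
    rw [hn]; exact Finset.sum_pos (fun i _ => hnpos i) Finset.univ_nonempty
  set A := 1 + ∑ j : Fin m, Real.exp (θ2 j.castSucc) with hA
  set B := 1 + ∑ j : Fin m, Real.exp (θ2 j.castSucc + θ12 i.castSucc j.castSucc) with hB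
  have hApos : 0 < A := by positivity
  have hBpos : 0 < B := by positivity
  have hp : ∀ a j, p a j = Real.exp (u + u1 a + θ2 j + θ12 a j) := by
    intro a j
    rw [← hmodel a j, Real.exp_log (hppos a j)]
  have hsum : ∀ a, ∑ j, p a j = Real.exp (u + u1 a) * ∑ j, Real.exp (θ2 j + θ12 a j) := by
    intro a
    rw [Finset.mul_sum]
    refine Finset.sum_congr rfl fun j _ => ?_
    rw [hp, ← Real.exp_add]; ring_nf
  have hSB : ∑ j, Real.exp (θ2 j + θ12 i.castSucc j) = B := by
    rw [Fin.sum_univ_castSucc, hθ2, hθ12a i]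
    simp [hB, add_comm]
  have hSA : ∑ j, Real.exp (θ2 j + θ12 (Fin.last k) j) = A := by
    rw [Fin.sum_univ_castSucc, hθ2]
    simp [hθ12b, hA, add_comm]
  have h1 : Real.exp (u + u1 i.castSucc) * B = nvec i.castSucc / n := by
    rw [← hSB, ← hsum, hconstr]
  have h2 : Real.exp u * A = nvec (Fin.last k) / n := by
    have h := hsum (Fin.last k)
    rw [hSA, hu1, add_zero] at h
    rw [← h, hconstr]
  have e1 := (div_eq_iff hnpos'.ne').mp h1.symm
  have e2 := (div_eq_iff hnpos'.ne').mp h2.symm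
  have hkey : Real.exp (u1 i.castSucc) * (nvec (Fin.last k) * B) = nvec i.castSucc * A := by
    rw [e1, e2, Real.exp_add]; ring
  have hexp : Real.exp (u1 i.castSucc) = (nvec i.castSucc * A) / (nvec (Fin.last k) * B) :=
    (eq_div_iff (ne_of_gt (mul_pos (hnpos _) hBpos))).mpr hkey
  have hni := (hnpos i.castSucc).ne'
  have hnl := (hnpos (Fin.last k)).ne'
  calc u1 i.castSucc = Real.log (Real.exp (u1 i.castSucc)) := (Real.log_exp _).symm
    _ = _ := by
      rw [hexp, Real.log_div (ne_of_gt (mul_pos (hnpos _) hApos))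
          (ne_of_gt (mul_pos (hnpos _) hBpos)),
        Real.log_mul hni hApos.ne', Real.log_mul hnl hBpos.ne',
        Real.log_div hni hnl, Real.log_div hApos.ne' hBpos.ne']
      ring
end

section
/- Let F be a k×k real symmetric positive definite matrix, let R be an r×k real matrix with linearly independent rows (r ≤ k), and let R(S) be the s×k submatrix of R consisting of the rows of R indexed by a subset S of {1,...,r} with s = card(S). Define P(S) = F^{-1} − F^{-1} R(S)^T (R(S) F^{-1} R(S)^T)^{-1} R(S) F^{-1} and P = F^{-1} − F^{-1} R^T (R F^{-1} R^T)^{-1} R F^{-1}. Then (P(S) − P)^T F (P(S) − P) = P(S) − P; in particular, if A is any k×k matrix with A^T A = F, the matrix A (P(S) − P) A^T is symmetric and idempotent. -/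
open Matrix

lemma aux_posdef {m k : Type*} [Fintype m] [DecidableEq m] [Fintype k] [DecidableEq k]
    (G : Matrix k k ℝ) (hG : G.PosDef) (B : Matrix m k ℝ)
    (hB : LinearIndependent ℝ (fun i => (B i : k → ℝ))) :
    (B * G * Bᵀ).PosDef := by
  refine posDef_iff_dotProduct_mulVec.mpr ⟨?_, ?_⟩
  · show (B * G * Bᵀ)ᴴ = _
    rw [conjTranspose_mul, conjTranspose_mul, hG.isHermitian.eq]
    have h1 : (Bᵀ)ᴴ = B := by ext i j; simp [conjTranspose_apply]
    have h2 : Bᴴ = Bᵀ := by ext i j; simp [conjTranspose_apply]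
    rw [h1, h2, Matrix.mul_assoc]
  · intro x hx
    have hvec : Bᵀ *ᵥ x ≠ 0 := by
      intro h
      apply hx
      have := Fintype.linearIndependent_iff.mp hB x ?_
      · funext i; exact this i
      · funext j
        have := congrFun h j
        simpa [Matrix.mulVec, dotProduct, mul_comm] using this
    have key : star x ⬝ᵥ (B * G * Bᵀ) *ᵥ x = star (Bᵀ *ᵥ x) ⬝ᵥ G *ᵥ (Bᵀ *ᵥ x) := by
      have : star x = x := rfl
      rw [this, show star (Bᵀ *ᵥ x) = Bᵀ *ᵥ x from rfl]
      rw [Matrix.mul_assoc, ← Matrix.mulVec_mulVec, dotProduct_mulVec,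
        ← Matrix.mulVec_mulVec, Matrix.mulVec_transpose]
    rw [key]
    exact hG.dotProduct_mulVec_pos hvec

/-- key step of the Proposition in the Appendix of the paper:
for a symmetric positive definite `F`, a full-row-rank `r×k` matrix `R` and the
submatrix `R(S)` of rows indexed by `S ⊆ {1,…,r}`, with
`P(S) = F⁻¹ − F⁻¹ R(S)ᵀ (R(S) F⁻¹ R(S)ᵀ)⁻¹ R(S) F⁻¹` and `P` the analogous
matrix for the full `R`, one has `(P(S) − P)ᵀ F (P(S) − P) = P(S) − P`;
in particular `A (P(S) − P) Aᵀ` is symmetric and idempotent whenever `Aᵀ A = F`. -/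
theorem stmt16 (k r : ℕ) (hrk : r ≤ k)
    (F : Matrix (Fin k) (Fin k) ℝ) (hF : F.PosDef)
    (R : Matrix (Fin r) (Fin k) ℝ)
    (hR : LinearIndependent ℝ (fun i => (R i : Fin k → ℝ)))
    (S : Finset (Fin r))
    (RS : Matrix {x // x ∈ S} (Fin k) ℝ)
    (hRS : RS = R.submatrix Subtype.val id)
    (PS P : Matrix (Fin k) (Fin k) ℝ)
    (hPS : PS = F⁻¹ - F⁻¹ * RSᵀ * (RS * F⁻¹ * RSᵀ)⁻¹ * RS * F⁻¹)
    (hP : P = F⁻¹ - F⁻¹ * Rᵀ * (R * F⁻¹ * Rᵀ)⁻¹ * R * F⁻¹) :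
    (PS - P)ᵀ * F * (PS - P) = PS - P ∧
    ∀ A : Matrix (Fin k) (Fin k) ℝ, Aᵀ * A = F →
      (A * (PS - P) * Aᵀ)ᵀ = A * (PS - P) * Aᵀ ∧
      (A * (PS - P) * Aᵀ) * (A * (PS - P) * Aᵀ) = A * (PS - P) * Aᵀ := by
  subst hPS hP hRS
  set G := F⁻¹ with hGdef
  -- basic symmetry facts
  have hFsym : Fᵀ = F := by
    ext i j
    have := congrFun (congrFun hF.isHermitian.eq i) j
    simpa [conjTranspose_apply] using this
  have hGpd : G.PosDef := hF.inv
  have hGsym : Gᵀ = G := by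
    rw [hGdef, Matrix.transpose_nonsing_inv, hFsym]
  -- linear independence of rows of RS
  have hRSli : LinearIndependent ℝ
      (fun i : {x // x ∈ S} => ((R.submatrix Subtype.val id) i : Fin k → ℝ)) :=
    hR.comp Subtype.val Subtype.val_injective
  -- notation
  set RS : Matrix {x // x ∈ S} (Fin k) ℝ := R.submatrix Subtype.val id with hRS
  set M := R * G * Rᵀ with hM
  set MS := RS * G * RSᵀ with hMS
  have hMpd : M.PosDef := aux_posdef G hGpd R hR
  have hMSpd : MS.PosDef := aux_posdef G hGpd RS hRSli
  have hMd : IsUnit M.det := isUnit_iff_ne_zero.mpr hMpd.det_pos.ne'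
  have hMSd : IsUnit MS.det := isUnit_iff_ne_zero.mpr hMSpd.det_pos.ne'
  have hFd : IsUnit F.det := isUnit_iff_ne_zero.mpr hF.det_pos.ne'
  have hMMi : M * M⁻¹ = 1 := Matrix.mul_nonsing_inv _ hMd
  have hMSMi : MS * MS⁻¹ = 1 := Matrix.mul_nonsing_inv _ hMSd
  have hGF : ∀ X : Matrix (Fin k) (Fin k) ℝ, G * (F * X) = X := by
    intro X
    rw [← Matrix.mul_assoc, hGdef, Matrix.nonsing_inv_mul _ hFd, Matrix.one_mul]
  -- selection matrix
  set E : Matrix {x // x ∈ S} (Fin r) ℝ :=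
    (1 : Matrix (Fin r) (Fin r) ℝ).submatrix Subtype.val id with hE
  have hER : E * R = RS := by
    ext i j
    simp [hE, hRS, Matrix.mul_apply, Matrix.one_apply]
  have hMinvT : M⁻¹ᵀ = M⁻¹ := by
    rw [Matrix.transpose_nonsing_inv]
    congr 1
    rw [hM, Matrix.transpose_mul, Matrix.transpose_mul, Matrix.transpose_transpose,
      hGsym, Matrix.mul_assoc]
  have hMSinvT : MS⁻¹ᵀ = MS⁻¹ := by
    rw [Matrix.transpose_nonsing_inv]
    congr 1
    rw [hMS, Matrix.transpose_mul, Matrix.transpose_mul, Matrix.transpose_transpose,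
      hGsym, Matrix.mul_assoc]
  set Q := G * Rᵀ * M⁻¹ * R * G with hQ
  set QS := G * RSᵀ * MS⁻¹ * RS * G with hQS
  clear_value G RS M MS E Q QS
  have hQsym : Qᵀ = Q := by
    rw [hQ]
    simp only [Matrix.transpose_mul, Matrix.transpose_transpose, hGsym, hMinvT,
      Matrix.mul_assoc]
  have hQSsym : QSᵀ = QS := by
    rw [hQS]
    simp only [Matrix.transpose_mul, Matrix.transpose_transpose, hGsym, hMSinvT,
      Matrix.mul_assoc]
  -- cancellation lemmas
  have hcancel : ∀ Z : Matrix (Fin r) (Fin k) ℝ, R * (G * (Rᵀ * (M⁻¹ * Z))) = Z := by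
    intro Z
    simp only [← Matrix.mul_assoc]
    rw [← hM, Matrix.mul_assoc M, ← Matrix.mul_assoc M, hMMi, Matrix.one_mul]
  have hScancel : ∀ Z : Matrix {x // x ∈ S} (Fin k) ℝ,
      RS * (G * (RSᵀ * (MS⁻¹ * Z))) = Z := by
    intro Z
    simp only [← Matrix.mul_assoc]
    rw [← hMS, Matrix.mul_assoc MS, ← Matrix.mul_assoc MS, hMSMi, Matrix.one_mul]
  have hRScancel : ∀ Z : Matrix (Fin k) (Fin k) ℝ,
      RS * (G * (Rᵀ * (M⁻¹ * (R * Z)))) = RS * Z := by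
    intro Z
    have h1 : RS * G * Rᵀ = E * M := by
      rw [← hER, hM]; simp only [Matrix.mul_assoc]
    have h2 : RS * G * Rᵀ * M⁻¹ = E := by
      rw [h1, Matrix.mul_assoc, hMMi, Matrix.mul_one]
    calc RS * (G * (Rᵀ * (M⁻¹ * (R * Z))))
        = RS * G * Rᵀ * M⁻¹ * R * Z := by simp only [Matrix.mul_assoc]
      _ = E * R * Z := by rw [h2]
      _ = RS * Z := by rw [hER]
  -- the four product identities
  have fQQ : Q * F * Q = Q := by
    rw [hQ]
    simp only [Matrix.mul_assoc]
    rw [hGF, hcancel]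
  have fSS : QS * F * QS = QS := by
    rw [hQS]
    simp only [Matrix.mul_assoc]
    rw [hGF, hScancel]
  have fSQ : QS * F * Q = QS := by
    rw [hQ, hQS]
    simp only [Matrix.mul_assoc]
    rw [hGF, hRScancel]
  have fQS : Q * F * QS = QS := by
    have h := congrArg Matrix.transpose fSQ
    rw [Matrix.transpose_mul, Matrix.transpose_mul, hQsym, hFsym, hQSsym,
      ← Matrix.mul_assoc] at h
    exact h
  -- difference
  have hD : G - QS - (G - Q) = Q - QS := by abel
  rw [hD]
  have hDsym : (Q - QS)ᵀ = Q - QS := by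
    rw [Matrix.transpose_sub, hQsym, hQSsym]
  have hDFD : (Q - QS) * F * (Q - QS) = Q - QS := by
    rw [Matrix.sub_mul, Matrix.sub_mul, Matrix.mul_sub, Matrix.mul_sub,
      fQQ, fSS, fSQ, fQS]
    abel
  constructor
  · rw [hDsym]; exact hDFD
  · intro A hA
    have hA' : ∀ X : Matrix (Fin k) (Fin k) ℝ, Aᵀ * (A * X) = F * X := by
      intro X; rw [← Matrix.mul_assoc, hA]
    constructor
    · simp only [Matrix.transpose_mul, Matrix.transpose_transpose, hDsym,
        Matrix.mul_assoc]
    · have inner : (Q - QS) * (F * ((Q - QS) * Aᵀ)) = (Q - QS) * Aᵀ := by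
        rw [← Matrix.mul_assoc, ← Matrix.mul_assoc, hDFD]
      calc A * (Q - QS) * Aᵀ * (A * (Q - QS) * Aᵀ)
          = A * ((Q - QS) * (Aᵀ * (A * ((Q - QS) * Aᵀ)))) := by
            simp only [Matrix.mul_assoc]
        _ = A * ((Q - QS) * (F * ((Q - QS) * Aᵀ))) := by rw [hA']
        _ = A * ((Q - QS) * Aᵀ) := by rw [inner]
        _ = A * (Q - QS) * Aᵀ := by rw [Matrix.mul_assoc]
end
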